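/- Let k be a kernel on a compact metric space X and let μ, ν be finite measures with full support on X such that ν has a density p with respect to μ satisfying 0 < c ≤ p(x) ≤ C for all x. Then the eigenvalues of the integral operators satisfy c·λ_i(T_{k,μ}) ≤ λ_i(T_{k,ν}) ≤ C·λ_i(T_{k,μ}) for all i. -/

import Mathlib

open MeasureTheory

/-- The `i`-th largest eigenvalue of a (compact, self-adjoint, positive) operator, via the
Courant–Fischer min-max principle: the supremum over `i`-dimensional subspaces `V` of the
infimum over nonzero `f ∈ V` of the Rayleigh quotient `⟪f, T f⟫ / ‖f‖²`. -/
noncomputable def rayleighEig {E : Type*} [NormedAddCommGroup E] [InnerProductSpace ℝ E]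
    (T : E →L[ℝ] E) (i : ℕ) : ℝ :=
  ⨆ V : {V : Submodule ℝ E // Module.finrank ℝ V = i},
    ⨅ f : {f : E // f ∈ V.1 ∧ f ≠ 0}, (inner ℝ (f : E) (T f) : ℝ) / ‖(f : E)‖ ^ 2

private lemma nonempty_sub' {E : Type*} [NormedAddCommGroup E] [InnerProductSpace ℝ E]
    {U : Submodule ℝ E} {i : ℕ} (hU : Module.finrank ℝ U = i) (hi : 1 ≤ i) :
    Nonempty {f : E // f ∈ U ∧ f ≠ 0} := by
  have hUne : U ≠ ⊥ := by
    intro h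
    rw [h, finrank_bot] at hU
    omega
  obtain ⟨f, hf, hf0⟩ := Submodule.exists_mem_ne_zero_of_ne_bot hUne
  exact ⟨⟨f, hf, hf0⟩⟩

private lemma rq_le_opNorm' {F : Type*} [NormedAddCommGroup F] [InnerProductSpace ℝ F]
    (S : F →L[ℝ] F) (g : F) : (inner ℝ g (S g) : ℝ) / ‖g‖ ^ 2 ≤ ‖S‖ := by
  rcases eq_or_ne g 0 with h | h
  · simp [h, S.opNorm_nonneg]
  · have hg : 0 < ‖g‖ := norm_pos_iff.mpr h
    rw [div_le_iff₀ (by positivity)]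
    calc (inner ℝ g (S g) : ℝ) ≤ ‖g‖ * ‖S g‖ := real_inner_le_norm _ _
      _ ≤ ‖g‖ * (‖S‖ * ‖g‖) := by
          have := S.le_opNorm g
          nlinarith
      _ = ‖S‖ * ‖g‖ ^ 2 := by ring

private lemma rayleigh_comparison' {E F : Type*} [NormedAddCommGroup E] [InnerProductSpace ℝ E]
    [NormedAddCommGroup F] [InnerProductSpace ℝ F]
    (T : E →L[ℝ] E) (S : F →L[ℝ] F) (A : E ≃ₗ[ℝ] F) (c : ℝ) (hc : 0 < c)
    (hT0 : ∀ f : E, 0 ≤ (inner ℝ f (T f) : ℝ)) (hS0 : ∀ g : F, 0 ≤ (inner ℝ g (S g) : ℝ))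
    (key : ∀ f : E, f ≠ 0 →
      c * ((inner ℝ f (T f) : ℝ) / ‖f‖ ^ 2) ≤ (inner ℝ (A f) (S (A f)) : ℝ) / ‖A f‖ ^ 2)
    (i : ℕ) (hi : 1 ≤ i) :
    c * rayleighEig T i ≤ rayleighEig S i := by
  have hSnn : 0 ≤ rayleighEig S i :=
    Real.iSup_nonneg fun V => Real.iInf_nonneg fun g => div_nonneg (hS0 _) (by positivity)
  have hbddS : BddAbove (Set.range fun V : {V : Submodule ℝ F // Module.finrank ℝ V = i} =>
      ⨅ g : {g : F // g ∈ V.1 ∧ g ≠ 0}, (inner ℝ (g : F) (S g) : ℝ) / ‖(g : F)‖ ^ 2) := by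
    refine ⟨‖S‖, ?_⟩
    rintro x ⟨V, rfl⟩
    obtain ⟨g⟩ := nonempty_sub' V.2 hi
    have hbb : BddBelow (Set.range fun g : {g : F // g ∈ V.1 ∧ g ≠ 0} =>
        (inner ℝ (g : F) (S g) : ℝ) / ‖(g : F)‖ ^ 2) := by
      refine ⟨0, ?_⟩
      rintro x ⟨g, rfl⟩
      exact div_nonneg (hS0 _) (by positivity)
    exact le_trans (ciInf_le hbb g) (rq_le_opNorm' S g)
  rw [show c * rayleighEig T i ≤ rayleighEig S i ↔
      rayleighEig T i ≤ rayleighEig S i / c from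
    by rw [le_div_iff₀ hc, mul_comm]]
  refine Real.iSup_le (fun V => ?_) (div_nonneg hSnn hc.le)
  set W : Submodule ℝ F := V.1.map (A : E →ₗ[ℝ] F) with hWdef
  have hW : Module.finrank ℝ W = i := (A.finrank_map_eq V.1).trans V.2
  have hneW := nonempty_sub' hW hi
  have hbbT : BddBelow (Set.range fun f : {f : E // f ∈ V.1 ∧ f ≠ 0} =>
      (inner ℝ (f : E) (T f) : ℝ) / ‖(f : E)‖ ^ 2) := by
    refine ⟨0, ?_⟩
    rintro x ⟨f, rfl⟩
    exact div_nonneg (hT0 _) (by positivity)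
  have h1 : c * (⨅ f : {f : E // f ∈ V.1 ∧ f ≠ 0},
      (inner ℝ (f : E) (T f) : ℝ) / ‖(f : E)‖ ^ 2) ≤
      ⨅ g : {g : F // g ∈ W ∧ g ≠ 0}, (inner ℝ (g : F) (S g) : ℝ) / ‖(g : F)‖ ^ 2 := by
    refine le_ciInf fun g => ?_
    obtain ⟨gv, ⟨hgW, hg0⟩⟩ := g
    obtain ⟨f, hfV, rfl⟩ := Submodule.mem_map.mp hgW
    have hf0 : f ≠ 0 := by
      intro h
      apply hg0
      simp [h]
    calc c * (⨅ f : {f : E // f ∈ V.1 ∧ f ≠ 0},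
          (inner ℝ (f : E) (T f) : ℝ) / ‖(f : E)‖ ^ 2)
        ≤ c * ((inner ℝ f (T f) : ℝ) / ‖f‖ ^ 2) :=
          mul_le_mul_of_nonneg_left (ciInf_le hbbT ⟨f, hfV, hf0⟩) hc.le
      _ ≤ _ := key f hf0
  have h2 : (⨅ g : {g : F // g ∈ W ∧ g ≠ 0},
      (inner ℝ (g : F) (S g) : ℝ) / ‖(g : F)‖ ^ 2) ≤ rayleighEig S i :=
    le_ciSup hbddS ⟨W, hW⟩
  rw [le_div_iff₀ hc, mul_comm]
  exact h1.trans h2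

theorem integral_operator_eigenvalues_equiv_of_equiv_densities
    {X : Type*} [MetricSpace X] [CompactSpace X] [MeasurableSpace X] [BorelSpace X]
    (μ ν : Measure X) [IsFiniteMeasure μ] [IsFiniteMeasure ν]
    [μ.IsOpenPosMeasure] [ν.IsOpenPosMeasure]
    (k : X → X → ℝ) (p : X → ℝ) (hp : Measurable p)
    (c C : ℝ) (hc : 0 < c)
    (hbound : ∀ x, c ≤ p x ∧ p x ≤ C)
    (hν : ν = μ.withDensity (fun x => ENNReal.ofReal (p x)))
    (Tμ : Lp ℝ 2 μ →L[ℝ] Lp ℝ 2 μ) (Tν : Lp ℝ 2 ν →L[ℝ] Lp ℝ 2 ν)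
    (hTμ : ∀ f : Lp ℝ 2 μ, (Tμ f : X → ℝ) =ᵐ[μ] fun x => ∫ y, k x y * f y ∂μ)
    (hTν : ∀ f : Lp ℝ 2 ν, (Tν f : X → ℝ) =ᵐ[ν] fun x => ∫ y, k x y * f y ∂ν)
    (hTμcomp : IsCompactOperator Tμ) (hTνcomp : IsCompactOperator Tν)
    (hTμsa : ∀ f g : Lp ℝ 2 μ, (inner ℝ (Tμ f) g : ℝ) = inner ℝ f (Tμ g))
    (hTνsa : ∀ f g : Lp ℝ 2 ν, (inner ℝ (Tν f) g : ℝ) = inner ℝ f (Tν g))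
    (hTμpos : ∀ f : Lp ℝ 2 μ, 0 ≤ (inner ℝ f (Tμ f) : ℝ))
    (hTνpos : ∀ f : Lp ℝ 2 ν, 0 ≤ (inner ℝ f (Tν f) : ℝ)) :
    ∀ i : ℕ, 1 ≤ i →
      c * rayleighEig Tμ i ≤ rayleighEig Tν i ∧
      rayleighEig Tν i ≤ C * rayleighEig Tμ i := by
  intro i hi
  rcases isEmpty_or_nonempty X with hX | hX
  · -- degenerate case: `X` empty, all eigenvalues are `0`
    have hμ0 : μ = 0 := Measure.eq_zero_of_isEmpty μ
    have hν0 : ν = 0 := Measure.eq_zero_of_isEmpty ν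
    haveI hsubμ : Subsingleton (Lp ℝ 2 μ) :=
      ⟨fun a b => Lp.ext (by
        have h : ae μ = ⊥ := by rw [hμ0]; exact ae_zero
        rw [h]; exact Filter.eventually_bot)⟩
    haveI hsubν : Subsingleton (Lp ℝ 2 ν) :=
      ⟨fun a b => Lp.ext (by
        have h : ae ν = ⊥ := by rw [hν0]; exact ae_zero
        rw [h]; exact Filter.eventually_bot)⟩
    haveI heμ : IsEmpty {V : Submodule ℝ (Lp ℝ 2 μ) // Module.finrank ℝ V = i} := by
      constructor
      rintro ⟨V, hV⟩
      have h0 : Module.finrank ℝ V = 0 := Module.finrank_zero_of_subsingleton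
      omega
    haveI heν : IsEmpty {V : Submodule ℝ (Lp ℝ 2 ν) // Module.finrank ℝ V = i} := by
      constructor
      rintro ⟨V, hV⟩
      have h0 : Module.finrank ℝ V = 0 := Module.finrank_zero_of_subsingleton
      omega
    unfold rayleighEig
    rw [Real.iSup_of_isEmpty, Real.iSup_of_isEmpty]
    simp
  -- main case
  obtain ⟨x0⟩ := hX
  have hC : 0 < C := hc.trans_le ((hbound x0).1.trans (hbound x0).2)
  have hppos : ∀ x, 0 < p x := fun x => hc.trans_le (hbound x).1
  set q : X → NNReal := fun x => (p x).toNNReal with hq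
  have hqm : Measurable q := hp.real_toNNReal
  have hνq : ν = μ.withDensity fun x => ((q x : NNReal) : ENNReal) := hν
  have hq_coe : ∀ x, (q x : ℝ) = p x := fun x => Real.coe_toNNReal _ (hppos x).le
  -- comparison of measures
  have hle1 : (ENNReal.ofReal c) • μ ≤ ν := by
    rw [hν, ← withDensity_const]
    exact withDensity_mono
      (Filter.Eventually.of_forall fun x => ENNReal.ofReal_le_ofReal (hbound x).1)
  have hle2 : ν ≤ (ENNReal.ofReal C) • μ := by
    rw [hν, ← withDensity_const]
    exact withDensity_mono
      (Filter.Eventually.of_forall fun x => ENNReal.ofReal_le_ofReal (hbound x).2)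
  have hcne : ENNReal.ofReal c ≠ 0 := by simp [hc, ENNReal.ofReal_eq_zero, not_le]
  have hCne : ENNReal.ofReal C ≠ 0 := by simp [hC, ENNReal.ofReal_eq_zero, not_le]
  have hμν : μ ≪ ν := by
    refine Measure.AbsolutelyContinuous.mk fun s hs h0 => ?_
    have h1 : ((ENNReal.ofReal c) • μ) s ≤ ν s := Measure.le_iff'.mp hle1 s
    rw [h0, Measure.smul_apply, smul_eq_mul] at h1
    have := le_antisymm h1 zero_le
    exact (mul_eq_zero.mp this).resolve_left hcne
  have hνμ : ν ≪ μ := hν ▸ withDensity_absolutelyContinuous μ _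
  -- Memℒp transfers
  have memLp_of_nu : ∀ {f : X → ℝ}, MemLp f 2 ν → MemLp f 2 μ := by
    intro f hf
    refine ⟨hf.1.mono_ac hμν, ?_⟩
    have hμle : μ ≤ ((ENNReal.ofReal c)⁻¹) • ν := by
      refine Measure.le_iff'.mpr fun s => ?_
      have h1 : ((ENNReal.ofReal c) • μ) s ≤ ν s := Measure.le_iff'.mp hle1 s
      rw [Measure.smul_apply, smul_eq_mul] at h1
      rw [Measure.smul_apply, smul_eq_mul]
      calc μ s = (ENNReal.ofReal c)⁻¹ * ((ENNReal.ofReal c) * μ s) := by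
            rw [← mul_assoc, ENNReal.inv_mul_cancel hcne ENNReal.ofReal_ne_top, one_mul]
        _ ≤ (ENNReal.ofReal c)⁻¹ * ν s := mul_le_mul_right h1 _
    calc eLpNorm f 2 μ ≤ eLpNorm f 2 (((ENNReal.ofReal c)⁻¹) • ν) :=
          eLpNorm_mono_measure f hμle
      _ = ((ENNReal.ofReal c)⁻¹) ^ (1 / (2 : ENNReal)).toReal • eLpNorm f 2 ν :=
          eLpNorm_smul_measure_of_ne_zero (by simp [hcne]) f 2 ν
      _ < ⊤ := by
          rw [smul_eq_mul]
          exact ENNReal.mul_lt_top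
            (ENNReal.rpow_lt_top_of_nonneg (by positivity) (by simp [hcne])) hf.2.lt_top
  have memLp_of_mu : ∀ {f : X → ℝ}, MemLp f 2 μ → MemLp f 2 ν := by
    intro f hf
    refine ⟨hf.1.mono_ac hνμ, ?_⟩
    calc eLpNorm f 2 ν ≤ eLpNorm f 2 ((ENNReal.ofReal C) • μ) := eLpNorm_mono_measure f hle2
      _ = (ENNReal.ofReal C) ^ (1 / (2 : ENNReal)).toReal • eLpNorm f 2 μ :=
          eLpNorm_smul_measure_of_ne_zero hCne f 2 μ
      _ < ⊤ := by
          rw [smul_eq_mul]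
          exact ENNReal.mul_lt_top
            (ENNReal.rpow_lt_top_of_nonneg (by positivity) ENNReal.ofReal_ne_top) hf.2.lt_top
  -- the multiplication maps
  have hmemA : ∀ f : Lp ℝ 2 ν, MemLp (fun x => p x * (f : X → ℝ) x) 2 μ := by
    intro f
    have hfμ : MemLp (f : X → ℝ) 2 μ := memLp_of_nu (Lp.memLp f)
    refine MemLp.of_le_mul (c := C) hfμ (hp.aestronglyMeasurable.mul hfμ.1) ?_
    refine Filter.Eventually.of_forall fun x => ?_
    rw [norm_mul]
    have h1 : ‖p x‖ ≤ C := by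
      rw [Real.norm_eq_abs, abs_of_pos (hppos x)]; exact (hbound x).2
    exact mul_le_mul_of_nonneg_right h1 (norm_nonneg _)
  have hmemB : ∀ g : Lp ℝ 2 μ, MemLp (fun x => (p x)⁻¹ * (g : X → ℝ) x) 2 ν := by
    intro g
    have hgν : MemLp (g : X → ℝ) 2 ν := memLp_of_mu (Lp.memLp g)
    refine MemLp.of_le_mul (c := c⁻¹) hgν (hp.inv.aestronglyMeasurable.mul hgν.1) ?_
    refine Filter.Eventually.of_forall fun x => ?_
    rw [norm_mul]
    have h1 : ‖(p x)⁻¹‖ ≤ c⁻¹ := by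
      rw [Real.norm_eq_abs, abs_of_pos (inv_pos.mpr (hppos x))]
      exact inv_anti₀ hc (hbound x).1
    exact mul_le_mul_of_nonneg_right h1 (norm_nonneg _)
  let Amap : Lp ℝ 2 ν →ₗ[ℝ] Lp ℝ 2 μ :=
    { toFun := fun f => (hmemA f).toLp _
      map_add' := by
        intro f g
        rw [← MemLp.toLp_add (hmemA f) (hmemA g)]
        apply MemLp.toLp_congr
        filter_upwards [(Lp.coeFn_add f g).filter_mono hμν.ae_le] with x hx
        simp only [hx, Pi.add_apply]
        ring
      map_smul' := by
        intro r f
        simp only [RingHom.id_apply]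
        rw [← MemLp.toLp_const_smul r (hmemA f)]
        apply MemLp.toLp_congr
        filter_upwards [(Lp.coeFn_smul r f).filter_mono hμν.ae_le] with x hx
        simp only [hx, Pi.smul_apply, smul_eq_mul]
        ring }
  let Bmap : Lp ℝ 2 μ →ₗ[ℝ] Lp ℝ 2 ν :=
    { toFun := fun g => (hmemB g).toLp _
      map_add' := by
        intro f g
        rw [← MemLp.toLp_add (hmemB f) (hmemB g)]
        apply MemLp.toLp_congr
        filter_upwards [(Lp.coeFn_add f g).filter_mono hνμ.ae_le] with x hx
        simp only [hx, Pi.add_apply]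
        ring
      map_smul' := by
        intro r f
        simp only [RingHom.id_apply]
        rw [← MemLp.toLp_const_smul r (hmemB f)]
        apply MemLp.toLp_congr
        filter_upwards [(Lp.coeFn_smul r f).filter_mono hνμ.ae_le] with x hx
        simp only [hx, Pi.smul_apply, smul_eq_mul]
        ring }
  have hA_coe : ∀ f : Lp ℝ 2 ν, (Amap f : X → ℝ) =ᵐ[μ] fun x => p x * (f : X → ℝ) x :=
    fun f => MemLp.coeFn_toLp (hmemA f)
  have hB_coe : ∀ g : Lp ℝ 2 μ, (Bmap g : X → ℝ) =ᵐ[ν] fun x => (p x)⁻¹ * (g : X → ℝ) x :=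
    fun g => MemLp.coeFn_toLp (hmemB g)
  have hABid : ∀ g : Lp ℝ 2 μ, Amap (Bmap g) = g := by
    intro g
    apply Lp.ext
    filter_upwards [hA_coe (Bmap g), (hB_coe g).filter_mono hμν.ae_le] with x h1 h2
    rw [h1, h2, ← mul_assoc, mul_inv_cancel₀ (hppos x).ne', one_mul]
  have hBAid : ∀ f : Lp ℝ 2 ν, Bmap (Amap f) = f := by
    intro f
    apply Lp.ext
    filter_upwards [hB_coe (Amap f), (hA_coe f).filter_mono hνμ.ae_le] with x h1 h2
    rw [h1, h2]
    have := (hppos x).ne'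
    field_simp
  let A : Lp ℝ 2 ν ≃ₗ[ℝ] Lp ℝ 2 μ :=
    LinearEquiv.ofLinear Amap Bmap (LinearMap.ext hABid) (LinearMap.ext hBAid)
  have hAapp : ∀ f : Lp ℝ 2 ν, A f = Amap f := fun _ => rfl
  -- integral identities
  have hint : ∀ g : X → ℝ, ∫ x, g x ∂ν = ∫ x, p x * g x ∂μ := by
    intro g
    rw [hνq, integral_withDensity_eq_integral_smul hqm]
    refine integral_congr_ae (Filter.Eventually.of_forall fun x => ?_)
    simp [NNReal.smul_def, hq_coe]
  have hinner : ∀ (m : Measure X) (f g : Lp ℝ 2 m),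
      (inner ℝ f g : ℝ) = ∫ x, (f : X → ℝ) x * (g : X → ℝ) x ∂m := by
    intro m f g
    rw [L2.inner_def]
    refine integral_congr_ae (Filter.Eventually.of_forall fun x => ?_)
    simp [RCLike.inner_apply, conj_trivial, mul_comm]
  have inner_eq : ∀ f : Lp ℝ 2 ν, (inner ℝ f (Tν f) : ℝ) = inner ℝ (Amap f) (Tμ (Amap f)) := by
    intro f
    have hker : ∀ x, (∫ y, k x y * (f : X → ℝ) y ∂ν) =
        ∫ y, k x y * (Amap f : X → ℝ) y ∂μ := by
      intro x
      rw [hint]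
      refine integral_congr_ae ?_
      filter_upwards [hA_coe f] with y hy
      rw [hy]
      ring
    calc (inner ℝ f (Tν f) : ℝ) = ∫ x, (f : X → ℝ) x * (Tν f : X → ℝ) x ∂ν := hinner _ _ _
      _ = ∫ x, (f : X → ℝ) x * (∫ y, k x y * (f : X → ℝ) y ∂ν) ∂ν := by
          refine integral_congr_ae ?_
          filter_upwards [hTν f] with x hx
          rw [hx]
      _ = ∫ x, (f : X → ℝ) x * (∫ y, k x y * (Amap f : X → ℝ) y ∂μ) ∂ν := by simp only [hker]
      _ = ∫ x, p x * ((f : X → ℝ) x * (∫ y, k x y * (Amap f : X → ℝ) y ∂μ)) ∂μ := hint _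
      _ = ∫ x, (Amap f : X → ℝ) x * (Tμ (Amap f) : X → ℝ) x ∂μ := by
          refine integral_congr_ae ?_
          filter_upwards [hA_coe f, hTμ (Amap f)] with x h1 h2
          rw [h1, h2]
          ring
      _ = inner ℝ (Amap f) (Tμ (Amap f)) := (hinner _ _ _).symm
  have norm_eq : ∀ f : Lp ℝ 2 ν,
      ‖f‖ ^ 2 = ∫ x, p x * ((f : X → ℝ) x * (f : X → ℝ) x) ∂μ := by
    intro f
    rw [← real_inner_self_eq_norm_sq, hinner, hint]
  have normA_eq : ∀ f : Lp ℝ 2 ν,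
      ‖Amap f‖ ^ 2 = ∫ x, (p x * (f : X → ℝ) x) * (p x * (f : X → ℝ) x) ∂μ := by
    intro f
    rw [← real_inner_self_eq_norm_sq, hinner]
    refine integral_congr_ae ?_
    filter_upwards [hA_coe f] with x h1
    rw [h1]
  have int1 : ∀ f : Lp ℝ 2 ν,
      Integrable (fun x => p x * ((f : X → ℝ) x * (f : X → ℝ) x)) μ := by
    intro f
    have h2 : Integrable (fun x => (f : X → ℝ) x * (f : X → ℝ) x) ν := by
      simpa [sq] using (Lp.memLp f).integrable_sq
    obtain ⟨F, hF⟩ : ∃ F : X → ℝ, F = (f : X → ℝ) := ⟨_, rfl⟩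
    rw [← hF] at h2 ⊢
    rw [hνq] at h2
    have h3 := (integrable_withDensity_iff_integrable_smul hqm).mp h2
    exact h3.congr (Filter.Eventually.of_forall fun x => by
      simp [NNReal.smul_def, hq_coe])
  have int2 : ∀ f : Lp ℝ 2 ν,
      Integrable (fun x => (p x * (f : X → ℝ) x) * (p x * (f : X → ℝ) x)) μ := by
    intro f
    simpa [sq] using (hmemA f).integrable_sq
  have hlow : ∀ f : Lp ℝ 2 ν, c * ‖f‖ ^ 2 ≤ ‖Amap f‖ ^ 2 := by
    intro f
    rw [norm_eq f, normA_eq f, ← integral_const_mul]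
    refine integral_mono_ae ((int1 f).const_mul c) (int2 f)
      (Filter.Eventually.of_forall fun x => ?_)
    have h1 := (hbound x).1
    have h2 := mul_nonneg (sub_nonneg.mpr h1)
      (mul_nonneg (hppos x).le (mul_self_nonneg ((f : X → ℝ) x)))
    dsimp only
    nlinarith [h2]
  have hhigh : ∀ f : Lp ℝ 2 ν, ‖Amap f‖ ^ 2 ≤ C * ‖f‖ ^ 2 := by
    intro f
    rw [norm_eq f, normA_eq f, ← integral_const_mul]
    refine integral_mono_ae (int2 f) ((int1 f).const_mul C)
      (Filter.Eventually.of_forall fun x => ?_)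
    have h1 := (hbound x).2
    have h2 := mul_nonneg (sub_nonneg.mpr h1)
      (mul_nonneg (hppos x).le (mul_self_nonneg ((f : X → ℝ) x)))
    dsimp only
    nlinarith [h2]
  constructor
  · -- c * λ_i(Tμ) ≤ λ_i(Tν), via A.symm
    refine rayleigh_comparison' Tμ Tν A.symm c hc hTμpos hTνpos (fun g hg0 => ?_) i hi
    set f : Lp ℝ 2 ν := A.symm g with hf
    have hAf : Amap f = g := by
      rw [← hAapp]
      exact A.apply_symm_apply g
    have hf0 : f ≠ 0 := by
      simp only [hf, ne_eq, LinearEquiv.map_eq_zero_iff]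
      exact hg0
    have hNf : (inner ℝ f (Tν f) : ℝ) = inner ℝ g (Tμ g) := by rw [inner_eq f, hAf]
    have hgpos : (0 : ℝ) < ‖g‖ ^ 2 := by
      have : (0 : ℝ) < ‖g‖ := norm_pos_iff.mpr hg0
      positivity
    have hfpos : (0 : ℝ) < ‖f‖ ^ 2 := by
      have : (0 : ℝ) < ‖f‖ := norm_pos_iff.mpr hf0
      positivity
    have hl := hlow f
    rw [hAf] at hl
    rw [mul_div_assoc' c _ _, div_le_div_iff₀ hgpos hfpos, ← hNf]
    nlinarith [hTνpos f, mul_le_mul_of_nonneg_left hl (hTνpos f)]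
  · -- λ_i(Tν) ≤ C * λ_i(Tμ), via A
    have h := rayleigh_comparison' Tν Tμ A C⁻¹ (inv_pos.mpr hC) hTνpos hTμpos
      (fun f hf0 => ?_) i hi
    · calc rayleighEig Tν i = C * (C⁻¹ * rayleighEig Tν i) := by
            field_simp
      _ ≤ C * rayleighEig Tμ i := mul_le_mul_of_nonneg_left h hC.le
    · rw [hAapp]
      have hNf : (inner ℝ f (Tν f) : ℝ) = inner ℝ (Amap f) (Tμ (Amap f)) := inner_eq f
      have hAf0 : Amap f ≠ 0 := by
        rw [← hAapp]
        simp only [ne_eq, LinearEquiv.map_eq_zero_iff]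
        exact hf0
      have hfpos : (0 : ℝ) < ‖f‖ ^ 2 := by
        have : (0 : ℝ) < ‖f‖ := norm_pos_iff.mpr hf0
        positivity
      have hApos : (0 : ℝ) < ‖Amap f‖ ^ 2 := by
        have : (0 : ℝ) < ‖Amap f‖ := norm_pos_iff.mpr hAf0
        positivity
      have hh := hhigh f
      rw [mul_div_assoc' C⁻¹ _ _, div_le_div_iff₀ hfpos hApos, ← hNf]
      have hnn := hTνpos f
      have h3 : (inner ℝ f (Tν f) : ℝ) * ‖Amap f‖ ^ 2 ≤ C * ((inner ℝ f (Tν f) : ℝ) * ‖f‖ ^ 2) := by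
        nlinarith [mul_le_mul_of_nonneg_left hh hnn]
      calc C⁻¹ * (inner ℝ f (Tν f) : ℝ) * ‖Amap f‖ ^ 2
          = C⁻¹ * ((inner ℝ f (Tν f) : ℝ) * ‖Amap f‖ ^ 2) := by ring
        _ ≤ C⁻¹ * (C * ((inner ℝ f (Tν f) : ℝ) * ‖f‖ ^ 2)) :=
            mul_le_mul_of_nonneg_left h3 (inv_pos.mpr hC).le
        _ = (inner ℝ f (Tν f) : ℝ) * ‖f‖ ^ 2 := by field_simp
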